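/- Cauchy property of the truncated move functionals: let d−1 < s < d, Δ ⊂ ℝ^d bounded with ρ = sup_{x∈Δ}‖x‖, η a finite configuration in Δ, and γ a locally finite configuration in ℝ^d. Define M^{(p)} = Σ_{x∈η} Σ_{y∈γ∩(Λ_p\Δ)} [g(x−y) − g(y)] where Λ_p is the centered box of volume p. Then for p large enough (so that ρ ≤ p^{1/d}/4) and all q > p, |M^{(q)} − M^{(p)}| ≤ s·4^{s+1}·ρ·|η| · Σ_{k=p}^{∞} N_k(γ) k^{−(s+1)/d}, where N_k(γ) = |γ ∩ (Λ_{k+1}\Λ_k)|. -/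
import Mathlib


open ENNReal

/-- Cauchy property of the truncated move functionals: with `g(x) = ‖x‖^(-s)`,
`d-1 < s < d`, `Λ_p` the centered box of volume `p`, `η` a finite configuration
in `Δ` (with `ρ = sup_{x∈Δ} ‖x‖`), and `γ` a locally finite configuration whose
trace on `Λ_p \ Δ` is the finite set `F p` and on the shell `Λ_{k+1} \ Λ_k` the
finite set `G k`, the truncations
`M p = ∑_{x∈η} ∑_{y∈F p} (g(x-y) - g(y))` satisfy, for `p` with
`ρ ≤ p^(1/d)/4` and `q > p`,
`|M q - M p| ≤ s 4^(s+1) ρ |η| ∑_{k≥p} N_k(γ) k^(-(s+1)/d)` where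
`N_k(γ) = |G k|`. -/
theorem move_functional_cauchy (d : ℕ) (hd : 1 ≤ d) (s : ℝ)
    (hs1 : (d : ℝ) - 1 < s) (hs2 : s < d)
    (Λ : ℕ → Set (EuclideanSpace ℝ (Fin d)))
    (hΛ : ∀ p : ℕ, Λ p = {x : EuclideanSpace ℝ (Fin d) |
      ∀ i, |x i| ≤ (p : ℝ) ^ (1 / (d : ℝ)) / 2})
    (Δ : Set (EuclideanSpace ℝ (Fin d))) (ρ : ℝ)
    (hρ : IsLUB ((fun x => ‖x‖) '' Δ) ρ)
    (η : Finset (EuclideanSpace ℝ (Fin d))) (hη : ↑η ⊆ Δ)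
    (γ : Set (EuclideanSpace ℝ (Fin d)))
    (F : ℕ → Finset (EuclideanSpace ℝ (Fin d)))
    (hF : ∀ p : ℕ, ↑(F p) = γ ∩ (Λ p \ Δ))
    (G : ℕ → Finset (EuclideanSpace ℝ (Fin d)))
    (hG : ∀ k : ℕ, ↑(G k) = γ ∩ (Λ (k + 1) \ Λ k))
    (p : ℕ) (hp : 1 ≤ p) (hpρ : ρ ≤ (p : ℝ) ^ (1 / (d : ℝ)) / 4)
    (q : ℕ) (hq : p < q) :
    ENNReal.ofReal
        |(∑ x ∈ η, ∑ y ∈ F q, (‖x - y‖ ^ (-s) - ‖y‖ ^ (-s))) -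
          (∑ x ∈ η, ∑ y ∈ F p, (‖x - y‖ ^ (-s) - ‖y‖ ^ (-s)))| ≤
      ENNReal.ofReal (s * 4 ^ (s + 1) * ρ * (η.card : ℝ)) *
        ∑' k : ℕ, (if p ≤ k then
          ((G k).card : ℝ≥0∞) * ENNReal.ofReal ((k : ℝ) ^ (-(s + 1) / (d : ℝ)))
          else 0) := by
  classical
  have hd1 : (1:ℝ) ≤ (d:ℝ) := by exact_mod_cast hd
  have hs0 : 0 < s := by linarith
  have hρ0 : 0 ≤ ρ := by
    rcases Set.eq_empty_or_nonempty Δ with h | ⟨z, hz⟩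
    · have h2 : ρ ≤ ρ - 1 := hρ.2 (fun a ha => by simp [h] at ha)
      linarith
    · exact (norm_nonneg z).trans (hρ.1 ⟨z, hz, rfl⟩)
  have hΛmono : ∀ {a b : ℕ}, a ≤ b → Λ a ⊆ Λ b := by
    intro a b hab z hz
    rw [hΛ] at hz ⊢
    simp only [Set.mem_setOf_eq] at hz ⊢
    intro i
    refine (hz i).trans ?_
    have : ((a:ℝ)) ^ (1/(d:ℝ)) ≤ ((b:ℝ)) ^ (1/(d:ℝ)) :=
      Real.rpow_le_rpow (Nat.cast_nonneg a) (Nat.cast_le.mpr hab) (by positivity)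
    linarith
  have hcoordn : ∀ (z : EuclideanSpace ℝ (Fin d)) (i : Fin d), |z i| ≤ ‖z‖ := by
    intro z i
    rw [EuclideanSpace.norm_eq]
    have h1 : |z i| = Real.sqrt (‖z i‖ ^ 2) := by
      rw [Real.sqrt_sq_eq_abs, Real.norm_eq_abs, abs_abs]
    rw [h1]
    exact Real.sqrt_le_sqrt (Finset.single_le_sum (f := fun j => ‖z j‖ ^ 2)
      (fun j _ => sq_nonneg _) (Finset.mem_univ i))
  have hnotΛ : ∀ (k : ℕ) (z : EuclideanSpace ℝ (Fin d)), z ∉ Λ k →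
      (k:ℝ) ^ (1/(d:ℝ)) / 2 ≤ ‖z‖ := by
    intro k z hz
    rw [hΛ] at hz
    simp only [Set.mem_setOf_eq] at hz
    push_neg at hz
    obtain ⟨i, hi⟩ := hz
    exact hi.le.trans (hcoordn z i)
  have hkmono : ∀ {k : ℕ}, p ≤ k → (p:ℝ) ^ (1/(d:ℝ)) ≤ (k:ℝ) ^ (1/(d:ℝ)) :=
    fun {k} hk => Real.rpow_le_rpow (Nat.cast_nonneg p) (Nat.cast_le.mpr hk) (by positivity)
  have hp1 : (1:ℝ) ≤ (p:ℝ) ^ (1/(d:ℝ)) := by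
    have h0 := Real.rpow_le_rpow (by norm_num : (0:ℝ) ≤ 1)
      (by exact_mod_cast hp : (1:ℝ) ≤ (p:ℝ)) (by positivity : (0:ℝ) ≤ 1/(d:ℝ))
    simpa using h0
  -- pointwise bound
  have hpoint : ∀ x ∈ η, ∀ k : ℕ, p ≤ k → ∀ y ∈ G k,
      |‖x - y‖ ^ (-s) - ‖y‖ ^ (-s)| ≤ s * 4 ^ (s+1) * ρ * (k:ℝ) ^ (-(s+1)/(d:ℝ)) := by
    intro x hx k hk y hy
    have hxρ : ‖x‖ ≤ ρ := hρ.1 ⟨x, hη hx, rfl⟩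
    have hx0 : 0 ≤ ‖x‖ := norm_nonneg x
    have hyG : y ∈ γ ∩ (Λ (k+1) \ Λ k) := by rw [← hG]; exact hy
    have hklb : (k:ℝ) ^ (1/(d:ℝ)) / 2 ≤ ‖y‖ := hnotΛ k y hyG.2.2
    have hpk : (1:ℝ) ≤ (k:ℝ) ^ (1/(d:ℝ)) := hp1.trans (hkmono hk)
    have hy0 : 0 < ‖y‖ := by linarith
    have hρk : ρ ≤ (k:ℝ) ^ (1/(d:ℝ)) / 4 := hpρ.trans (by linarith [hkmono hk])
    have hyx : 2 * ‖x‖ ≤ ‖y‖ := by linarith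
    have hc : 0 < ‖y‖ / 2 := by linarith
    have hr1 : ‖y‖ / 2 ≤ ‖x - y‖ := by
      have h1 : ‖y‖ - ‖x‖ ≤ ‖y - x‖ := norm_sub_norm_le y x
      rw [norm_sub_rev] at h1
      linarith
    have hdiff : |‖x - y‖ - ‖y‖| ≤ ‖x‖ := by
      have h2 := abs_norm_sub_norm_le (x - y) (-y)
      simpa [norm_neg, sub_neg_eq_add, sub_add_cancel] using h2
    have hmvt : |‖x - y‖ ^ (-s) - ‖y‖ ^ (-s)| ≤
        s * (‖y‖/2) ^ (-s - 1) * |‖x - y‖ - ‖y‖| := by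
      have key := Convex.norm_image_sub_le_of_norm_hasDerivWithin_le
        (f := fun t : ℝ => t ^ (-s)) (f' := fun t : ℝ => (-s) * t ^ (-s - 1))
        (s := Set.Ici (‖y‖/2)) (C := s * (‖y‖/2) ^ (-s - 1))
        (fun t ht => (Real.hasDerivAt_rpow_const
          (Or.inl (ne_of_gt (lt_of_lt_of_le hc ht)))).hasDerivWithinAt)
        (fun t ht => by
          have ht0 : 0 < t := lt_of_lt_of_le hc ht
          rw [Real.norm_eq_abs, abs_mul, abs_neg, abs_of_pos hs0,
            abs_of_pos (Real.rpow_pos_of_pos ht0 _)]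
          exact mul_le_mul_of_nonneg_left
            (Real.rpow_le_rpow_of_nonpos hc ht (by linarith)) hs0.le)
        (convex_Ici _) (Set.mem_Ici.mpr (by linarith : ‖y‖/2 ≤ ‖y‖))
        (Set.mem_Ici.mpr hr1)
      simpa [Real.norm_eq_abs] using key
    have hstep : |‖x - y‖ ^ (-s) - ‖y‖ ^ (-s)| ≤ s * ‖x‖ * (‖y‖/2) ^ (-s-1) := by
      have h3 : s * (‖y‖/2) ^ (-s - 1) * |‖x - y‖ - ‖y‖| ≤
          s * (‖y‖/2) ^ (-s - 1) * ‖x‖ := by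
        have hcn : 0 ≤ s * (‖y‖/2) ^ (-s - 1) :=
          mul_nonneg hs0.le (Real.rpow_nonneg hc.le _)
        exact mul_le_mul_of_nonneg_left hdiff hcn
      calc |‖x - y‖ ^ (-s) - ‖y‖ ^ (-s)| ≤
          s * (‖y‖/2) ^ (-s - 1) * |‖x - y‖ - ‖y‖| := hmvt
        _ ≤ s * (‖y‖/2) ^ (-s - 1) * ‖x‖ := h3
        _ = s * ‖x‖ * (‖y‖/2) ^ (-s-1) := by ring
    have hq4 : (k:ℝ) ^ (1/(d:ℝ)) / 4 ≤ ‖y‖ / 2 := by linarith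
    have hq40 : 0 < (k:ℝ) ^ (1/(d:ℝ)) / 4 := by linarith
    have hmono2 : (‖y‖/2) ^ (-s-1) ≤ ((k:ℝ) ^ (1/(d:ℝ)) / 4) ^ (-s-1) :=
      Real.rpow_le_rpow_of_nonpos hq40 hq4 (by linarith)
    have hcalc : ((k:ℝ) ^ (1/(d:ℝ)) / 4) ^ (-s-1) =
        4 ^ (s+1) * (k:ℝ) ^ (-(s+1)/(d:ℝ)) := by
      rw [Real.div_rpow (by positivity) (by norm_num : (0:ℝ) ≤ 4),
        ← Real.rpow_mul (Nat.cast_nonneg k),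
        show (1/(d:ℝ)) * (-s-1) = -(s+1)/(d:ℝ) by ring,
        show (-s-1 : ℝ) = -(s+1) by ring,
        Real.rpow_neg (by norm_num : (0:ℝ) ≤ 4), div_eq_mul_inv, inv_inv, mul_comm]
    calc |‖x - y‖ ^ (-s) - ‖y‖ ^ (-s)| ≤ s * ‖x‖ * (‖y‖/2) ^ (-s-1) := hstep
      _ ≤ (s * ρ) * (((k:ℝ) ^ (1/(d:ℝ)) / 4) ^ (-s-1)) := by
          apply mul_le_mul (mul_le_mul_of_nonneg_left hxρ hs0.le) hmono2
            (Real.rpow_nonneg hc.le _) (mul_nonneg hs0.le hρ0)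
      _ = s * 4 ^ (s+1) * ρ * (k:ℝ) ^ (-(s+1)/(d:ℝ)) := by rw [hcalc]; ring
  -- finset combinatorics
  have hFsub : F p ⊆ F q := by
    rw [← Finset.coe_subset, hF, hF]
    intro z hz
    exact ⟨hz.1, hΛmono hq.le hz.2.1, hz.2.2⟩
  have hsplit : (∑ x ∈ η, ∑ y ∈ F q, (‖x - y‖ ^ (-s) - ‖y‖ ^ (-s))) -
      (∑ x ∈ η, ∑ y ∈ F p, (‖x - y‖ ^ (-s) - ‖y‖ ^ (-s))) =
      ∑ x ∈ η, ∑ y ∈ F q \ F p, (‖x - y‖ ^ (-s) - ‖y‖ ^ (-s)) := by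
    rw [← Finset.sum_sub_distrib]
    refine Finset.sum_congr rfl fun x _ => ?_
    rw [← Finset.sum_sdiff hFsub]
    ring
  have hq1 : 1 ≤ q := hp.trans hq.le
  have hsub2 : F q \ F p ⊆ (Finset.Ico p q).biUnion G := by
    intro y hy
    rw [Finset.mem_sdiff] at hy
    have hyq : y ∈ γ ∩ (Λ q \ Δ) := by rw [← hF]; exact hy.1
    have hyp : y ∉ Λ p := fun hyΛ => hy.2 (by
      rw [← Finset.mem_coe, hF]
      exact ⟨hyq.1, hyΛ, hyq.2.2⟩)
    have hex : ∃ k, y ∈ Λ (k + 1) :=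
      ⟨q - 1, by rw [Nat.sub_add_cancel hq1]; exact hyq.2.1⟩
    set k := Nat.find hex with hkdef
    have hkΛ : y ∈ Λ (k + 1) := Nat.find_spec hex
    have hkp : p ≤ k := by
      by_contra h
      push_neg at h
      exact hyp (hΛmono (Nat.succ_le_of_lt h) hkΛ)
    have hkq : k < q := by
      have h5 : k ≤ q - 1 := Nat.find_min' hex
        (by rw [Nat.sub_add_cancel hq1]; exact hyq.2.1)
      omega
    have hk01 : 1 ≤ k := hp.trans hkp
    have hknΛ : y ∉ Λ k := by
      have h6 := Nat.find_min hex (show k - 1 < k by omega)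
      rwa [Nat.sub_add_cancel hk01] at h6
    refine Finset.mem_biUnion.mpr ⟨k, Finset.mem_Ico.mpr ⟨hkp, hkq⟩, ?_⟩
    rw [← Finset.mem_coe, hG]
    exact ⟨hyq.1, hkΛ, hknΛ⟩
  have hGd : ∀ a b : ℕ, a < b → Disjoint (G a) (G b) := by
    intro a b hab
    rw [Finset.disjoint_left]
    intro z hza hzb
    have h1 : z ∈ γ ∩ (Λ (a+1) \ Λ a) := by rw [← hG]; exact hza
    have h2 : z ∈ γ ∩ (Λ (b+1) \ Λ b) := by rw [← hG]; exact hzb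
    exact h2.2.2 (hΛmono (Nat.succ_le_of_lt hab) h1.2.1)
  have hGpd : (↑(Finset.Ico p q) : Set ℕ).PairwiseDisjoint G := by
    intro a _ b _ hab
    rcases lt_or_gt_of_ne hab with h | h
    · exact hGd a b h
    · exact (hGd b a h).symm
  set Sfin : ℝ := ∑ k ∈ Finset.Ico p q, ((G k).card : ℝ) * (k:ℝ) ^ (-(s+1)/(d:ℝ)) with hS
  have hinner : ∀ x ∈ η, ∑ y ∈ F q \ F p, |‖x - y‖ ^ (-s) - ‖y‖ ^ (-s)|
      ≤ s * 4 ^ (s+1) * ρ * Sfin := by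
    intro x hx
    calc ∑ y ∈ F q \ F p, |‖x - y‖ ^ (-s) - ‖y‖ ^ (-s)|
        ≤ ∑ y ∈ (Finset.Ico p q).biUnion G, |‖x - y‖ ^ (-s) - ‖y‖ ^ (-s)| :=
          Finset.sum_le_sum_of_subset_of_nonneg hsub2 (fun y _ _ => abs_nonneg _)
      _ = ∑ k ∈ Finset.Ico p q, ∑ y ∈ G k, |‖x - y‖ ^ (-s) - ‖y‖ ^ (-s)| :=
          Finset.sum_biUnion hGpd
      _ ≤ ∑ k ∈ Finset.Ico p q, ∑ _y ∈ G k,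
            (s * 4 ^ (s+1) * ρ * (k:ℝ) ^ (-(s+1)/(d:ℝ))) := by
          refine Finset.sum_le_sum fun k hk => Finset.sum_le_sum fun y hy => ?_
          exact hpoint x hx k (Finset.mem_Ico.mp hk).1 y hy
      _ = s * 4 ^ (s+1) * ρ * Sfin := by
          rw [hS, Finset.mul_sum]
          refine Finset.sum_congr rfl fun k _ => ?_
          rw [Finset.sum_const, nsmul_eq_mul]
          ring
  have habs : |(∑ x ∈ η, ∑ y ∈ F q, (‖x - y‖ ^ (-s) - ‖y‖ ^ (-s))) -
      (∑ x ∈ η, ∑ y ∈ F p, (‖x - y‖ ^ (-s) - ‖y‖ ^ (-s)))| ≤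
      s * 4 ^ (s+1) * ρ * (η.card : ℝ) * Sfin := by
    rw [hsplit]
    calc |∑ x ∈ η, ∑ y ∈ F q \ F p, (‖x - y‖ ^ (-s) - ‖y‖ ^ (-s))|
        ≤ ∑ x ∈ η, |∑ y ∈ F q \ F p, (‖x - y‖ ^ (-s) - ‖y‖ ^ (-s))| :=
          Finset.abs_sum_le_sum_abs _ _
      _ ≤ ∑ x ∈ η, ∑ y ∈ F q \ F p, |‖x - y‖ ^ (-s) - ‖y‖ ^ (-s)| :=
          Finset.sum_le_sum fun x _ => Finset.abs_sum_le_sum_abs _ _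
      _ ≤ ∑ _x ∈ η, (s * 4 ^ (s+1) * ρ * Sfin) := Finset.sum_le_sum hinner
      _ = s * 4 ^ (s+1) * ρ * (η.card : ℝ) * Sfin := by
          rw [Finset.sum_const, nsmul_eq_mul]
          ring
  have hC0 : 0 ≤ s * 4 ^ (s+1) * ρ * (η.card : ℝ) :=
    mul_nonneg (mul_nonneg (mul_nonneg hs0.le (Real.rpow_nonneg (by norm_num) _)) hρ0)
      (Nat.cast_nonneg _)
  calc ENNReal.ofReal
        |(∑ x ∈ η, ∑ y ∈ F q, (‖x - y‖ ^ (-s) - ‖y‖ ^ (-s))) -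
          (∑ x ∈ η, ∑ y ∈ F p, (‖x - y‖ ^ (-s) - ‖y‖ ^ (-s)))|
      ≤ ENNReal.ofReal (s * 4 ^ (s+1) * ρ * (η.card : ℝ) * Sfin) :=
        ENNReal.ofReal_le_ofReal habs
    _ = ENNReal.ofReal (s * 4 ^ (s+1) * ρ * (η.card : ℝ)) * ENNReal.ofReal Sfin :=
        ENNReal.ofReal_mul hC0
    _ ≤ ENNReal.ofReal (s * 4 ^ (s + 1) * ρ * (η.card : ℝ)) *
        ∑' k : ℕ, (if p ≤ k then
          ((G k).card : ℝ≥0∞) * ENNReal.ofReal ((k : ℝ) ^ (-(s + 1) / (d : ℝ)))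
          else 0) := by
        refine mul_le_mul_right ?_ _
        rw [hS, ENNReal.ofReal_sum_of_nonneg (fun k _ =>
          mul_nonneg (Nat.cast_nonneg _) (Real.rpow_nonneg (Nat.cast_nonneg _) _))]
        have heq : ∀ k ∈ Finset.Ico p q,
            ENNReal.ofReal (((G k).card : ℝ) * (k:ℝ) ^ (-(s+1)/(d:ℝ))) =
            (if p ≤ k then
              ((G k).card : ℝ≥0∞) * ENNReal.ofReal ((k : ℝ) ^ (-(s + 1) / (d : ℝ)))
              else 0) := by
          intro k hk
          rw [if_pos (Finset.mem_Ico.mp hk).1,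
            ENNReal.ofReal_mul (Nat.cast_nonneg _), ENNReal.ofReal_natCast]
        rw [Finset.sum_congr rfl heq]
        exact ENNReal.sum_le_tsum _
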